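/- The curve defined by y1^2 - 2 y1 y3 + y3^2 - y1 y4 = 0 and y2^2 + y2 y3 + y1 y4 - y3 y4 - y4^2 = 0 is contained in the quartic surface Z7, i.e., the defining quartic of Z7 lies in the ideal generated by these two quadrics. -/
import Mathlib

open MvPolynomial

/-- The defining quartic of the surface `Z₇` in `ℙ³`. -/
noncomputable def Z7 : MvPolynomial (Fin 4) ℂ :=
  X 0 ^ 2 * X 1 ^ 2 + X 0 ^ 2 * X 1 * X 2 - X 0 * X 1 ^ 2 * X 2 - X 0 * X 1 * X 2 ^ 2
    - X 0 ^ 2 * X 1 * X 3 - X 0 * X 1 ^ 2 * X 3 + X 0 * X 1 * X 2 * X 3 - X 1 * X 2 ^ 2 * X 3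
    + X 0 * X 1 * X 3 ^ 2 + X 2 ^ 2 * X 3 ^ 2

/-- The quadric `y1² - 2 y1 y3 + y3² - y1 y4`. -/
noncomputable def E7q1 : MvPolynomial (Fin 4) ℂ :=
  X 0 ^ 2 - 2 * X 0 * X 2 + X 2 ^ 2 - X 0 * X 3

/-- The quadric `y2² + y2 y3 + y1 y4 - y3 y4 - y4²`. -/
noncomputable def E7q2 : MvPolynomial (Fin 4) ℂ :=
  X 1 ^ 2 + X 1 * X 2 + X 0 * X 3 - X 2 * X 3 - X 3 ^ 2

/-- The curve cut out by the two quadrics is contained in `Z₇`: the defining quartic of `Z₇`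
lies in the ideal generated by the two quadrics. -/
theorem Z7_mem_ideal_of_genus_one_curve : Z7 ∈ Ideal.span ({E7q1, E7q2} : Set (MvPolynomial (Fin 4) ℂ)) := by
  rw [Ideal.mem_span_pair]
  refine ⟨X 1 ^ 2 + X 1 * X 2 - X 1 * X 3 - X 2 * X 3,
    X 0 * X 2 - X 2 ^ 2, ?_⟩
  simp only [Z7, E7q1, E7q2]
  ring
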